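/- Let n ≥ 3 and let G be a k-fold cover of the cycle graph C_n. Then γ(G) ≥ (2/3)·k·γ(C_n), i.e., 3·γ(G) ≥ 2·k·γ(C_n). -/

import Mathlib

/-- `π` is a covering projection from `G` onto `F`: it is surjective and maps the
neighbourhood of each vertex `v` of `G` bijectively onto the neighbourhood of `π v` in `F`. -/
def IsCover {V W : Type*} (G : SimpleGraph V) (F : SimpleGraph W) (π : V → W) : Prop :=
  Function.Surjective π ∧ ∀ v : V, Set.BijOn π (G.neighborSet v) (F.neighborSet (π v))

/-- The covering projection `π` is `k`-fold: every fiber has exactly `k` elements. -/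
def IsKFold {V W : Type*} (π : V → W) (k : ℕ) : Prop :=
  ∀ u : W, Nat.card (π ⁻¹' {u}) = k

/-- `S` is a dominating set of `F`. -/
def IsDominatingSet {V : Type*} (F : SimpleGraph V) (S : Set V) : Prop :=
  ∀ v ∉ S, ∃ u ∈ S, F.Adj v u

/-- The domination number `γ(F)`. -/
noncomputable def dominationNumber {V : Type*} (F : SimpleGraph V) : ℕ :=
  sInf {n | ∃ S : Set V, IsDominatingSet F S ∧ S.ncard = n}

/-- `S` is a total dominating set of `F`. -/
def IsTotalDominatingSet {V : Type*} (F : SimpleGraph V) (S : Set V) : Prop :=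
  ∀ v : V, ∃ u ∈ S, F.Adj v u

/-- The total domination number `γ_t(F)`. -/
noncomputable def totalDominationNumber {V : Type*} (F : SimpleGraph V) : ℕ :=
  sInf {n | ∃ S : Set V, IsTotalDominatingSet F S ∧ S.ncard = n}

/-- `S` is a connected dominating set of `F`. -/
def IsConnDominatingSet {V : Type*} (F : SimpleGraph V) (S : Set V) : Prop :=
  IsDominatingSet F S ∧ (F.induce S).Connected

/-- The connected domination number `γ_c(F)`. -/
noncomputable def connectedDominationNumber {V : Type*} (F : SimpleGraph V) : ℕ :=
  sInf {n | ∃ S : Set V, IsConnDominatingSet F S ∧ S.ncard = n}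

-- adjacency helper
lemma cyc_adj_succ {m : ℕ} (a b : Fin (m + 3)) (h : b = a + 1) :
    (SimpleGraph.cycleGraph (m + 3)).Adj a b := by
  rw [SimpleGraph.cycleGraph_adj']
  right
  rw [h]
  have h1 : a + 1 - a = 1 := add_sub_cancel_left a 1
  rw [h1]
  rfl

-- upper bound on domination number of cycle
lemma cycle_dom_le {n : ℕ} (hn : 3 ≤ n) :
    dominationNumber (SimpleGraph.cycleGraph n) ≤ n / 2 := by
  obtain ⟨m, rfl⟩ : ∃ m, n = m + 3 := ⟨n - 3, by omega⟩
  set n := m + 3 with hn3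
  have hn0 : 0 < n := by omega
  set S : Set (Fin n) := (fun j : Fin (n / 2) => (⟨2 * j.val, by omega⟩ : Fin n)) '' Set.univ with hS
  have hmem : ∀ v : Fin n, v ∈ S ↔ ∃ j, j < n / 2 ∧ v.val = 2 * j := by
    intro v
    constructor
    · rintro ⟨j, -, rfl⟩; exact ⟨j.val, j.isLt, rfl⟩
    · rintro ⟨j, hj, hv⟩; exact ⟨⟨j, hj⟩, Set.mem_univ _, by simp [Fin.ext_iff, hv]⟩
  have hdom : IsDominatingSet (SimpleGraph.cycleGraph n) S := by
    intro v hv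
    rw [hmem] at hv
    push_neg at hv
    rcases Nat.even_or_odd v.val with he | ho
    · -- v even, must be the last vertex (n odd, v = n - 1)
      obtain ⟨j, hj⟩ := he
      have hv2 : ¬ j < n / 2 := fun h => (hv j h) (by omega)
      have hvlt := v.isLt
      refine ⟨⟨0, hn0⟩, (hmem _).2 ⟨0, by omega, by simp⟩, ?_⟩
      refine cyc_adj_succ v ⟨0, hn0⟩ (Fin.ext ?_)
      show (0 : ℕ) = (v.val + 1) % n
      have hlast : v.val + 1 = n := by omega
      simp [hlast]
    · -- v odd: v - 1 ∈ S
      obtain ⟨j, hj⟩ := ho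
      have hvlt := v.isLt
      refine ⟨⟨2 * j, by omega⟩, (hmem _).2 ⟨j, by omega, rfl⟩, ?_⟩
      refine (cyc_adj_succ ⟨2 * j, by omega⟩ v (Fin.ext ?_)).symm
      show v.val = (2 * j + 1) % n
      rw [Nat.mod_eq_of_lt (by omega)]; omega
  have hcard : S.ncard = n / 2 := by
    rw [hS, Set.ncard_image_of_injective _ (fun a b hab => by
      simp only [Fin.mk.injEq] at hab
      exact Fin.ext (by omega)), Set.ncard_univ]
    simp
  calc dominationNumber (SimpleGraph.cycleGraph n) ≤ S.ncard :=
        Nat.sInf_le ⟨S, hdom, rfl⟩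
    _ = n / 2 := hcard

-- any dominating set in a graph of max degree ≤ 2 has size ≥ |V|/3
lemma dom_card_le {V : Type*} [Fintype V] (G : SimpleGraph V) [DecidableRel G.Adj]
    (hdeg : ∀ v, G.degree v ≤ 2) {S : Set V} (hS : IsDominatingSet G S) :
    Fintype.card V ≤ 3 * S.ncard := by
  classical
  have hfin : S.Finite := Set.toFinite S
  have hsub : (Finset.univ : Finset V) ⊆
      hfin.toFinset.biUnion fun s => insert s (G.neighborFinset s) := by
    intro v _
    rw [Finset.mem_biUnion]
    by_cases hv : v ∈ S
    · exact ⟨v, hfin.mem_toFinset.2 hv, Finset.mem_insert_self _ _⟩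
    · obtain ⟨u, hu, hadj⟩ := hS v hv
      exact ⟨u, hfin.mem_toFinset.2 hu,
        Finset.mem_insert.2 (Or.inr ((G.mem_neighborFinset _ _).2 hadj.symm))⟩
  calc Fintype.card V = (Finset.univ : Finset V).card := rfl
    _ ≤ _ := Finset.card_le_card hsub
    _ ≤ ∑ s ∈ hfin.toFinset, (insert s (G.neighborFinset s)).card := Finset.card_biUnion_le
    _ ≤ ∑ _s ∈ hfin.toFinset, 3 := Finset.sum_le_sum (fun s _ =>
        le_trans (Finset.card_insert_le _ _) (by have := hdeg s; rw [SimpleGraph.degree] at this; omega))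
    _ = 3 * hfin.toFinset.card := by rw [Finset.sum_const, smul_eq_mul, mul_comm]
    _ = 3 * S.ncard := by rw [Set.ncard_eq_toFinset_card _ hfin]


/-- If `G` is a `k`-fold cover of the cycle `C_n` (`n ≥ 3`), then
`3·γ(G) ≥ 2·k·γ(C_n)`. -/
theorem dominationNumber_cycle_cover {V : Type*} [Fintype V] (n : ℕ) (hn : 3 ≤ n)
    (G : SimpleGraph V) (π : V → Fin n) (k : ℕ)
    (hπ : IsCover G (SimpleGraph.cycleGraph n) π) (hk : IsKFold π k) :
    2 * k * dominationNumber (SimpleGraph.cycleGraph n) ≤ 3 * dominationNumber G := by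
  classical
  obtain ⟨hsurj, hbij⟩ := hπ
  obtain ⟨m, rfl⟩ : ∃ m, n = m + 3 := ⟨n - 3, by omega⟩
  letI : DecidableRel G.Adj := Classical.decRel _
  have hdeg : ∀ v : V, G.degree v ≤ 2 := by
    intro v
    have h1 : Nat.card (G.neighborSet v) =
        Nat.card ((SimpleGraph.cycleGraph (m + 3)).neighborSet (π v)) :=
      Nat.card_congr (Set.BijOn.equiv π (hbij v))
    rw [Nat.card_eq_fintype_card, Nat.card_eq_fintype_card,
      SimpleGraph.card_neighborSet_eq_degree, SimpleGraph.card_neighborSet_eq_degree,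
      SimpleGraph.cycleGraph_degree_three_le] at h1
    omega
  have hfib : ∀ u : Fin (m + 3), (Finset.univ.filter fun v => π v = u).card = k := by
    intro u
    have h := hk u
    rw [Nat.card_coe_set_eq, Set.ncard_eq_toFinset_card'] at h
    rw [← h]
    congr 1
    ext v
    simp
  have hcV : Fintype.card V = k * (m + 3) := by
    rw [← Finset.card_univ,
      Finset.card_eq_sum_card_fiberwise (f := π) (t := Finset.univ) (fun x _ => Finset.mem_univ _)]
    simp [hfib, Finset.sum_const, mul_comm]
  have hne : ((Set.univ : Set V).ncard) ∈
      {p | ∃ S : Set V, IsDominatingSet G S ∧ S.ncard = p} :=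
    ⟨Set.univ, fun v hv => absurd (Set.mem_univ v) hv, rfl⟩
  obtain ⟨S, hSdom, hSc⟩ := Nat.sInf_mem (Set.nonempty_of_mem hne)
  have hlow : Fintype.card V ≤ 3 * dominationNumber G := by
    rw [show dominationNumber G = S.ncard from hSc.symm]
    exact dom_card_le G hdeg hSdom
  have hup := cycle_dom_le (show 3 ≤ m + 3 by omega)
  calc 2 * k * dominationNumber (SimpleGraph.cycleGraph (m + 3))
      ≤ 2 * k * ((m + 3) / 2) := Nat.mul_le_mul_left _ hup
    _ = k * (2 * ((m + 3) / 2)) := by ring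
    _ ≤ k * (m + 3) := Nat.mul_le_mul_left k (by omega)
    _ = Fintype.card V := hcV.symm
    _ ≤ 3 * dominationNumber G := hlow
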